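/- Let u, v, w ∈ {0,1}* and a, b ∈ {0,1}, and set x = u a ā v b w, y = u ā v b b̄ w, and z = u a ā v b b̄ w. If x and y are not Type-A confusable, then I_2(x) ∩ I_2(y) = I_1(z) ∪ { u s w : s ∈ (I_2(a ā v b) ∩ I_2(ā v b b̄)) \ I_1(a ā v b b̄) }, and this union is disjoint. -/

import Mathlib

open List

/-- The `t`-insertion ball of a binary word `x`: all words of length `|x| + t`
containing `x` as a (not necessarily contiguous) subsequence. -/
def insBall (t : ℕ) (x : List Bool) : Set (List Bool) :=
  {z | z.length = x.length + t ∧ x.Sublist z}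

/-- Componentwise complement of a binary word. -/
def bcompl (w : List Bool) : List Bool := w.map (fun c => !c)

/-- `wpow p i` is the concatenation of `i` copies of the word `p`. -/
def wpow (p : List Bool) (i : ℕ) : List Bool := (List.replicate i p).flatten

/-- `w` is an alternating word of length at least 1:
`w = (a ā)^i` with `i ≥ 1`, or `w = (a ā)^j a` with `j ≥ 0`. -/
def IsAlt (w : List Bool) : Prop :=
  ∃ a : Bool, (∃ i, 1 ≤ i ∧ w = wpow [a, !a] i) ∨ (∃ j, w = wpow [a, !a] j ++ [a])

/-- Type-A confusability: `x = u w v`, `y = u w̄ v` for an alternating block `w`. -/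
def TypeA (x y : List Bool) : Prop :=
  ∃ u v w : List Bool, IsAlt w ∧ x = u ++ w ++ v ∧ y = u ++ bcompl w ++ v

/-- Type-B confusability: `{x, y} = {u a ā v b w, u ā v b b̄ w}`. -/
def TypeB (x y : List Bool) : Prop :=
  ∃ (u v w : List Bool) (a b : Bool),
    ({x, y} : Set (List Bool)) =
      {u ++ [a, !a] ++ v ++ [b] ++ w, u ++ [!a] ++ v ++ [b, !b] ++ w}

/-- `p` is a period of `s` : `s_i = s_{i+p}` whenever both indices are in range. -/
def IsPeriodOf (p : ℕ) (s : List Bool) : Prop :=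
  ∀ i, i + p < s.length → s.getD i false = s.getD (i + p) false

/-- The (smallest) period of `s` is at most `ℓ`. -/
def PeriodLe (s : List Bool) (ℓ : ℕ) : Prop :=
  ∃ p, 1 ≤ p ∧ p ≤ ℓ ∧ IsPeriodOf p s

/-- `R(n, ℓ, t)`: binary words of length `n` in which every contiguous subword
of period at most `ℓ` has length at most `t`. -/
def Rset (n ℓ t : ℕ) : Set (List Bool) :=
  {x | x.length = n ∧ ∀ s : List Bool, s <:+: x → PeriodLe s ℓ → s.length ≤ t}

/-- `Inv(x)`: the number of pairs `i < j` with `x_i > x_j` (i.e. `x_i = 1`, `x_j = 0`). -/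
def invNum (x : List Bool) : ℕ :=
  ((Finset.range x.length ×ˢ Finset.range x.length).filter
    (fun q => q.1 < q.2 ∧ x.getD q.1 false = true ∧ x.getD q.2 false = false)).card

-- helpers

lemma sub_cons_ne {x d : Bool} {l t : List Bool} (h : x :: l <+ d :: t) (hne : x ≠ d) :
    x :: l <+ t := by
  cases h with
  | cons _ h => exact h
  | cons_cons => exact absurd rfl hne

lemma sub_snoc_ne {x d : Bool} {l t : List Bool} (h : l ++ [x] <+ t ++ [d]) (hne : x ≠ d) :
    l ++ [x] <+ t := by
  have h1 : x :: l.reverse <+ d :: t.reverse := by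
    simpa using List.reverse_sublist.mpr h
  have h2 := sub_cons_ne h1 hne
  have h3 : (l ++ [x]).reverse <+ t.reverse := by simpa using h2
  exact List.reverse_sublist.mp h3

lemma sub_snoc_peel {x : Bool} {l t : List Bool} (h : l ++ [x] <+ t ++ [x]) : l <+ t :=
  (List.append_sublist_append_right _).mp h

def altAt : Bool → List Bool → Prop
  | _, [] => True
  | a, x :: l => x = a ∧ altAt (!a) l

@[simp] lemma altAt_nil (a : Bool) : altAt a [] := trivial

@[simp] lemma altAt_cons (a x : Bool) (l : List Bool) :
    altAt a (x :: l) ↔ x = a ∧ altAt (!a) l := Iff.rfl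

lemma wpow_succ (p : List Bool) (n : ℕ) : wpow p (n + 1) = p ++ wpow p n := by
  simp [wpow, List.replicate_succ]

lemma altAt_struct : ∀ (n : ℕ) (l : List Bool), l.length ≤ n → ∀ a : Bool, l ≠ [] → altAt a l →
    (∃ i, 1 ≤ i ∧ l = wpow [a, !a] i) ∨ ∃ j, l = wpow [a, !a] j ++ [a] := by
  intro n
  induction n with
  | zero =>
    intro l hl a hne _
    cases l with
    | nil => exact absurd rfl hne
    | cons x t => simp at hl
  | succ n ih =>
    intro l hl a hne halt
    cases l with
    | nil => exact absurd rfl hne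
    | cons x t =>
      cases t with
      | nil =>
        obtain ⟨rfl, -⟩ := halt
        exact Or.inr ⟨0, by simp [wpow]⟩
      | cons y t' =>
        obtain ⟨rfl, rfl, ht⟩ := halt
        rw [Bool.not_not] at ht
        by_cases htn : t' = []
        · subst htn
          exact Or.inl ⟨1, le_refl _, by simp [wpow]⟩
        · have hlen : t'.length ≤ n := by simp at hl; omega
          rcases ih t' hlen x htn ht with ⟨i, hi, rfl⟩ | ⟨j, rfl⟩
          · exact Or.inl ⟨i + 1, by omega, by simp [wpow_succ]⟩
          · exact Or.inr ⟨j + 1, by simp [wpow_succ]⟩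

lemma alt_of_sublist : ∀ (s : List Bool) (a c : Bool),
    s ++ [c, !c] <+ [a, !a] ++ s ++ [c] → a :: bcompl s = s ++ [c] := by
  intro s
  induction s with
  | nil =>
    intro a c h
    have : c = a := by revert h; cases a <;> cases c <;> decide
    subst this
    simp [bcompl]
  | cons s₀ s' ih =>
    intro a c h
    by_cases hs : s₀ = a
    · subst hs
      have h1 : s' ++ [c, !c] <+ [!s₀, !(!s₀)] ++ s' ++ [c] := by
        rw [Bool.not_not]
        have h0 : s₀ :: (s' ++ [c, !c]) <+ s₀ :: ((!s₀) :: s₀ :: (s' ++ [c])) := by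
          simpa using h
        simpa using List.cons_sublist_cons.mp h0
      have h3 := ih (!s₀) c h1
      simpa [bcompl] using congrArg (List.cons s₀) h3
    · have hs' : s₀ = !a := by cases s₀ <;> cases a <;> simp_all
      subst hs'
      have h1 : (!a) :: (s' ++ [c, !c]) <+ (!a) :: (!a) :: (s' ++ [c]) := by
        have := sub_cons_ne (x := !a) (d := a) (by simpa using h) (by cases a <;> simp)
        simpa using this
      have h2 := List.cons_sublist_cons.mp h1
      have h3 : s' ++ [c, !c] = (!a) :: (s' ++ [c]) :=
        h2.eq_of_length (by simp)
      have h4 := congrArg List.reverse h3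
      simp at h4

lemma altAt_of_eq : ∀ (l : List Bool) (a c : Bool), a :: bcompl l = l ++ [c] → altAt a (l ++ [c]) := by
  intro l
  induction l with
  | nil =>
    intro a c h
    simp [bcompl] at h
    simp [h]
  | cons l₀ l' ih =>
    intro a c h
    simp only [bcompl, List.map_cons, List.cons_append, List.cons.injEq] at h
    obtain ⟨rfl, h2⟩ := h
    have h3 : (!a) :: bcompl l' = l' ++ [c] := by simpa [bcompl] using h2
    simp only [List.cons_append, altAt_cons]
    exact ⟨by trivial, ih (!a) c h3⟩

lemma typeA_core (v : List Bool) (a b : Bool) (h : v ++ [b, !b] <+ [a, !a] ++ v ++ [b]) :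
    TypeA ([a, !a] ++ v ++ [b]) ([!a] ++ v ++ [b, !b]) := by
  have heq : a :: bcompl v = v ++ [b] := alt_of_sublist v a b h
  refine ⟨[], [], [a, !a] ++ v ++ [b], ?_, by simp, ?_⟩
  · have h1 : altAt a ([a, !a] ++ v ++ [b]) := by
      simp only [List.append_assoc, List.cons_append, List.nil_append, altAt_cons,
        Bool.not_not]
      exact ⟨by trivial, by trivial, altAt_of_eq v a b heq⟩
    rcases altAt_struct (([a, !a] ++ v ++ [b]).length) _ le_rfl a (by simp) h1 with h2 | h2
    · exact ⟨a, Or.inl h2⟩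
    · exact ⟨a, Or.inr h2⟩
  · have hb : bcompl ([a, !a] ++ v ++ [b]) = (!a) :: ((a :: bcompl v) ++ [!b]) := by
      simp [bcompl]
    rw [hb, heq]
    simp

lemma TypeA.consA (c : Bool) {x y : List Bool} (h : TypeA x y) : TypeA (c :: x) (c :: y) := by
  obtain ⟨u, v, w, hw, rfl, rfl⟩ := h
  exact ⟨c :: u, v, w, hw, rfl, rfl⟩

lemma TypeA.snocA (d : Bool) {x y : List Bool} (h : TypeA x y) : TypeA (x ++ [d]) (y ++ [d]) := by
  obtain ⟨u, v, w, hw, rfl, rfl⟩ := h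
  exact ⟨u, v ++ [d], w, hw, by simp, by simp⟩

lemma xne (u v w : List Bool) (a b : Bool) :
    u ++ ([a, !a] ++ v ++ [b] ++ w) ≠ u ++ ([!a] ++ v ++ [b, !b] ++ w) := by
  intro h
  have h2 := List.append_cancel_left h
  have h3 : a = !a := by
    have := congrArg (fun l => l.headI) h2
    simpa using this
  exact absurd h3 (by cases a <;> simp)

lemma one_ins_nil (v : List Bool) (a b : Bool) :
    ∀ (w e : List Bool),
      ([a, !a] ++ v ++ [b] ++ w) <+ e →
      ([!a] ++ v ++ [b, !b] ++ w) <+ e →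
      e.length = ([a, !a] ++ v ++ [b] ++ w).length + 1 →
      TypeA ([a, !a] ++ v ++ [b] ++ w) ([!a] ++ v ++ [b, !b] ++ w) ∨
        e = [a, !a] ++ v ++ [b, !b] ++ w := by
  intro w
  induction w using List.reverseRecOn with
  | nil =>
    intro e hx hy hlen
    cases e with
    | nil => simp at hlen
    | cons e₀ e' =>
      have he : e₀ = a ∨ e₀ = !a := by cases e₀ <;> cases a <;> simp
      rcases he with rfl | rfl
      · have hy1 : (!e₀) :: (v ++ [b, !b]) <+ e' := by
          refine sub_cons_ne (d := e₀) ?_ (by cases e₀ <;> simp)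
          simpa using hy
        have hlen' : ((!e₀) :: (v ++ [b, !b])).length = e'.length := by
          simp at hlen ⊢; omega
        have := hy1.eq_of_length hlen'
        right
        simp [← this]
      · have hx1 : a :: ((!a) :: (v ++ [b])) <+ e' := by
          refine sub_cons_ne (d := !a) ?_ (by cases a <;> simp)
          simpa using hx
        have hlen' : (a :: ((!a) :: (v ++ [b]))).length = e'.length := by
          simp at hlen ⊢; omega
        have he' := hx1.eq_of_length hlen'
        subst he'
        have hy1 : (!a) :: (v ++ [b, !b]) <+ (!a) :: (a :: ((!a) :: (v ++ [b]))) := by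
          simpa using hy
        have hy2 := List.cons_sublist_cons.mp hy1
        left
        have := typeA_core v a b (by simpa using hy2)
        simpa using this
  | append_singleton w' d0 ih =>
    intro e hx hy hlen
    rcases e.eq_nil_or_concat with rfl | ⟨e', d, rfl⟩
    · simp at hlen
    · simp only [List.concat_eq_append] at hx hy hlen ⊢
      by_cases hd : d = d0
      · subst hd
        have hx1 : ([a, !a] ++ v ++ [b] ++ w') ++ [d] <+ e' ++ [d] := by
          simpa [List.append_assoc] using hx
        have hy1 : ([!a] ++ v ++ [b, !b] ++ w') ++ [d] <+ e' ++ [d] := by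
          simpa [List.append_assoc] using hy
        have hlen1 : e'.length = ([a, !a] ++ v ++ [b] ++ w').length + 1 := by
          simp at hlen ⊢; omega
        rcases ih e' (sub_snoc_peel hx1) (sub_snoc_peel hy1) hlen1 with h | rfl
        · left
          have := h.snocA d
          simpa [List.append_assoc] using this
        · right
          simp [List.append_assoc]
      · have hx1 : ([a, !a] ++ v ++ [b] ++ w') ++ [d0] <+ e' :=
          sub_snoc_ne (by simpa [List.append_assoc] using hx) (fun h => hd h.symm)
        have hy1 : ([!a] ++ v ++ [b, !b] ++ w') ++ [d0] <+ e' :=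
          sub_snoc_ne (by simpa [List.append_assoc] using hy) (fun h => hd h.symm)
        have hlx : (([a, !a] ++ v ++ [b] ++ w') ++ [d0]).length = e'.length := by
          simp at hlen ⊢; omega
        have hex := hx1.eq_of_length hlx
        have hly : (([!a] ++ v ++ [b, !b] ++ w') ++ [d0]).length = e'.length := by
          simp at hlen ⊢; omega
        have hey := hy1.eq_of_length hly
        exfalso
        apply xne ([] : List Bool) v (w' ++ [d0]) a b
        simp only [List.nil_append]
        calc [a, !a] ++ v ++ [b] ++ (w' ++ [d0])
            = ([a, !a] ++ v ++ [b] ++ w') ++ [d0] := by simp [List.append_assoc]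
          _ = e' := hex
          _ = ([!a] ++ v ++ [b, !b] ++ w') ++ [d0] := hey.symm
          _ = [!a] ++ v ++ [b, !b] ++ (w' ++ [d0]) := by simp [List.append_assoc]

lemma one_ins (v : List Bool) (a b : Bool) :
    ∀ (u w e : List Bool),
      (u ++ ([a, !a] ++ v ++ [b] ++ w)) <+ e →
      (u ++ ([!a] ++ v ++ [b, !b] ++ w)) <+ e →
      e.length = (u ++ ([a, !a] ++ v ++ [b] ++ w)).length + 1 →
      TypeA (u ++ ([a, !a] ++ v ++ [b] ++ w)) (u ++ ([!a] ++ v ++ [b, !b] ++ w)) ∨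
        e = u ++ ([a, !a] ++ v ++ [b, !b] ++ w) := by
  intro u
  induction u with
  | nil =>
    intro w e hx hy hlen
    have := one_ins_nil v a b w e (by simpa using hx) (by simpa using hy)
      (by simpa using hlen)
    simpa using this
  | cons c₀ u' ih =>
    intro w e hx hy hlen
    cases e with
    | nil => simp at hlen
    | cons d e' =>
      by_cases hd : d = c₀
      · subst hd
        have hx0 : d :: (u' ++ ([a, !a] ++ v ++ [b] ++ w)) <+ d :: e' := by
          simpa using hx
        have hx1 := List.cons_sublist_cons.mp hx0
        have hy0 : d :: (u' ++ ([!a] ++ v ++ [b, !b] ++ w)) <+ d :: e' := by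
          simpa using hy
        have hy1 := List.cons_sublist_cons.mp hy0
        have hlen1 : e'.length = (u' ++ ([a, !a] ++ v ++ [b] ++ w)).length + 1 := by
          simp at hlen ⊢; omega
        rcases ih w e' hx1 hy1 hlen1 with h | rfl
        · left
          have := h.consA d
          simpa using this
        · right
          simp
      · have hx1 : c₀ :: (u' ++ ([a, !a] ++ v ++ [b] ++ w)) <+ e' := by
          refine sub_cons_ne (d := d) ?_ (fun h => hd h.symm)
          simpa using hx
        have hy1 : c₀ :: (u' ++ ([!a] ++ v ++ [b, !b] ++ w)) <+ e' := by
          refine sub_cons_ne (d := d) ?_ (fun h => hd h.symm)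
          simpa using hy
        have hlx : (c₀ :: (u' ++ ([a, !a] ++ v ++ [b] ++ w))).length = e'.length := by
          simp at hlen ⊢; omega
        have hex := hx1.eq_of_length hlx
        have hly : (c₀ :: (u' ++ ([!a] ++ v ++ [b, !b] ++ w))).length = e'.length := by
          simp at hlen ⊢; omega
        have hey := hy1.eq_of_length hly
        exfalso
        exact xne (c₀ :: u') v w a b (by rw [List.cons_append, hex, ← hey]; simp)

lemma two_ins_nil (v : List Bool) (a b : Bool) :
    ∀ (w c : List Bool),
      ¬ TypeA ([a, !a] ++ v ++ [b] ++ w) ([!a] ++ v ++ [b, !b] ++ w) →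
      ([a, !a] ++ v ++ [b] ++ w) <+ c →
      ([!a] ++ v ++ [b, !b] ++ w) <+ c →
      c.length = ([a, !a] ++ v ++ [b] ++ w).length + 2 →
      (([a, !a] ++ v ++ [b, !b] ++ w) <+ c) ∨
        ∃ s, c = s ++ w ∧ ([a, !a] ++ v ++ [b]) <+ s ∧ ([!a] ++ v ++ [b, !b]) <+ s ∧
          s.length = ([a, !a] ++ v ++ [b]).length + 2 := by
  intro w
  induction w using List.reverseRecOn with
  | nil =>
    intro c hA hx hy hlen
    right
    exact ⟨c, by simp, by simpa using hx, by simpa using hy, by simpa using hlen⟩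
  | append_singleton w' d0 ih =>
    intro c hA hx hy hlen
    rcases c.eq_nil_or_concat with rfl | ⟨c', d, rfl⟩
    · simp at hlen
    · simp only [List.concat_eq_append] at hx hy hlen ⊢
      by_cases hd : d = d0
      · subst hd
        have hx1 : ([a, !a] ++ v ++ [b] ++ w') ++ [d] <+ c' ++ [d] := by
          simpa [List.append_assoc] using hx
        have hy1 : ([!a] ++ v ++ [b, !b] ++ w') ++ [d] <+ c' ++ [d] := by
          simpa [List.append_assoc] using hy
        have hlen1 : c'.length = ([a, !a] ++ v ++ [b] ++ w').length + 2 := by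
          simp at hlen ⊢; omega
        have hA1 : ¬ TypeA ([a, !a] ++ v ++ [b] ++ w') ([!a] ++ v ++ [b, !b] ++ w') := by
          intro h
          exact hA (by simpa [List.append_assoc] using h.snocA d)
        rcases ih c' hA1 (sub_snoc_peel hx1) (sub_snoc_peel hy1) hlen1 with h | ⟨s, rfl, h1, h2, h3⟩
        · left
          have := h.append (Sublist.refl [d])
          simpa [List.append_assoc] using this
        · right
          exact ⟨s, by simp, h1, h2, h3⟩
      · have hx1 : ([a, !a] ++ v ++ [b] ++ w') ++ [d0] <+ c' :=
          sub_snoc_ne (by simpa [List.append_assoc] using hx) (fun h => hd h.symm)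
        have hy1 : ([!a] ++ v ++ [b, !b] ++ w') ++ [d0] <+ c' :=
          sub_snoc_ne (by simpa [List.append_assoc] using hy) (fun h => hd h.symm)
        have hlen1 : c'.length = ([a, !a] ++ v ++ [b] ++ (w' ++ [d0])).length + 1 := by
          simp at hlen ⊢; omega
        rcases one_ins v a b [] (w' ++ [d0]) c'
          (by simpa [List.append_assoc] using hx1)
          (by simpa [List.append_assoc] using hy1)
          (by simpa using hlen1) with h | rfl
        · exact absurd (by simpa using h) hA
        · left
          have : ([] ++ ([a, !a] ++ v ++ [b, !b] ++ (w' ++ [d0]))) <+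
              ([] ++ ([a, !a] ++ v ++ [b, !b] ++ (w' ++ [d0]))) ++ [d] :=
            (List.sublist_append_left _ _)
          simpa [List.append_assoc] using this

lemma two_ins (v : List Bool) (a b : Bool) :
    ∀ (u w c : List Bool),
      ¬ TypeA (u ++ ([a, !a] ++ v ++ [b] ++ w)) (u ++ ([!a] ++ v ++ [b, !b] ++ w)) →
      (u ++ ([a, !a] ++ v ++ [b] ++ w)) <+ c →
      (u ++ ([!a] ++ v ++ [b, !b] ++ w)) <+ c →
      c.length = (u ++ ([a, !a] ++ v ++ [b] ++ w)).length + 2 →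
      ((u ++ ([a, !a] ++ v ++ [b, !b] ++ w)) <+ c) ∨
        ∃ s, c = u ++ s ++ w ∧ ([a, !a] ++ v ++ [b]) <+ s ∧ ([!a] ++ v ++ [b, !b]) <+ s ∧
          s.length = ([a, !a] ++ v ++ [b]).length + 2 := by
  intro u
  induction u with
  | nil =>
    intro w c hA hx hy hlen
    have := two_ins_nil v a b w c (by simpa using hA) (by simpa using hx)
      (by simpa using hy) (by simpa using hlen)
    rcases this with h | ⟨s, rfl, h1, h2, h3⟩
    · left; simpa using h
    · right; exact ⟨s, by simp, h1, h2, h3⟩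
  | cons c₀ u' ih =>
    intro w c hA hx hy hlen
    cases c with
    | nil => simp at hlen
    | cons d c' =>
      by_cases hd : d = c₀
      · subst hd
        have hx0 : d :: (u' ++ ([a, !a] ++ v ++ [b] ++ w)) <+ d :: c' := by
          simpa using hx
        have hx1 := List.cons_sublist_cons.mp hx0
        have hy0 : d :: (u' ++ ([!a] ++ v ++ [b, !b] ++ w)) <+ d :: c' := by
          simpa using hy
        have hy1 := List.cons_sublist_cons.mp hy0
        have hlen1 : c'.length = (u' ++ ([a, !a] ++ v ++ [b] ++ w)).length + 2 := by
          simp at hlen ⊢; omega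
        have hA1 : ¬ TypeA (u' ++ ([a, !a] ++ v ++ [b] ++ w))
            (u' ++ ([!a] ++ v ++ [b, !b] ++ w)) := by
          intro h
          exact hA (by simpa using h.consA d)
        rcases ih w c' hA1 hx1 hy1 hlen1 with h | ⟨s, rfl, h1, h2, h3⟩
        · left
          exact List.cons_sublist_cons.mpr h
        · right
          exact ⟨s, by simp, h1, h2, h3⟩
      · have hx1 : c₀ :: (u' ++ ([a, !a] ++ v ++ [b] ++ w)) <+ c' := by
          refine sub_cons_ne (d := d) ?_ (fun h => hd h.symm)
          simpa using hx
        have hy1 : c₀ :: (u' ++ ([!a] ++ v ++ [b, !b] ++ w)) <+ c' := by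
          refine sub_cons_ne (d := d) ?_ (fun h => hd h.symm)
          simpa using hy
        have hlen1 : c'.length = ((c₀ :: u') ++ ([a, !a] ++ v ++ [b] ++ w)).length + 1 := by
          simp at hlen ⊢; omega
        rcases one_ins v a b (c₀ :: u') w c' (by simpa using hx1) (by simpa using hy1)
          hlen1 with h | rfl
        · exact absurd (by simpa using h) hA
        · left
          exact Sublist.cons d (by simp)

theorem stmt9 (u v w : List Bool) (a b : Bool) (x y z : List Bool)
    (hx : x = u ++ [a, !a] ++ v ++ [b] ++ w)
    (hy : y = u ++ [!a] ++ v ++ [b, !b] ++ w)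
    (hz : z = u ++ [a, !a] ++ v ++ [b, !b] ++ w)
    (hA : ¬ TypeA x y) :
    insBall 2 x ∩ insBall 2 y =
      insBall 1 z ∪
        (fun s => u ++ s ++ w) ''
          ((insBall 2 ([a, !a] ++ v ++ [b]) ∩ insBall 2 ([!a] ++ v ++ [b, !b])) \
            insBall 1 ([a, !a] ++ v ++ [b, !b])) ∧
    Disjoint (insBall 1 z)
      ((fun s => u ++ s ++ w) ''
        ((insBall 2 ([a, !a] ++ v ++ [b]) ∩ insBall 2 ([!a] ++ v ++ [b, !b])) \
          insBall 1 ([a, !a] ++ v ++ [b, !b]))) := by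
  subst hx hy hz
  constructor
  · ext c
    simp only [Set.mem_inter_iff, Set.mem_union, Set.mem_image, Set.mem_diff, insBall,
      Set.mem_setOf_eq, List.append_assoc]
    constructor
    · rintro ⟨⟨hl1, hsx⟩, ⟨hl2, hsy⟩⟩
      rcases two_ins v a b u w c (by simpa [List.append_assoc] using hA)
          (by simpa [List.append_assoc] using hsx)
          (by simpa [List.append_assoc] using hsy)
          (by simp only [List.length_append, List.length_cons] at hl1 ⊢; omega)
        with h | ⟨s, rfl, h1, h2, h3⟩
      · refine Or.inl ⟨?_, by simpa [List.append_assoc] using h⟩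
        simp only [List.length_append, List.length_cons] at hl1 ⊢
        omega
      · by_cases hs : (([a, !a] ++ v ++ [b, !b]) <+ s)
        · refine Or.inl ⟨?_, ?_⟩
          · simp only [List.length_append, List.length_cons] at h3 ⊢
            omega
          · have hzc : u ++ (([a, !a] ++ v ++ [b, !b]) ++ w) <+ u ++ (s ++ w) :=
              (List.append_sublist_append_left u).mpr
                ((List.append_sublist_append_right w).mpr hs)
            simpa [List.append_assoc] using hzc
        · refine Or.inr ⟨s, ⟨⟨⟨?_, by simpa [List.append_assoc] using h1⟩,
            ⟨?_, by simpa [List.append_assoc] using h2⟩⟩, ?_⟩, by simp [List.append_assoc]⟩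
          · simp only [List.length_append, List.length_cons] at h3 ⊢
            omega
          · simp only [List.length_append, List.length_cons] at h3 ⊢
            omega
          · rintro ⟨-, hsub⟩
            exact hs (by simpa [List.append_assoc] using hsub)
    · rintro (⟨hl, hsub⟩ | ⟨s, ⟨⟨⟨hl1, h1⟩, ⟨hl2, h2⟩⟩, -⟩, rfl⟩)
      · have hxz : u ++ ([a, !a] ++ (v ++ ([b] ++ w))) <+
            u ++ ([a, !a] ++ (v ++ ([b, !b] ++ w))) :=
          (List.append_sublist_append_left u).mpr
            ((List.append_sublist_append_left [a, !a]).mpr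
              ((List.append_sublist_append_left v).mpr
                (Sublist.cons₂ b (Sublist.cons (!b) (Sublist.refl w)))))
        have hyz : u ++ ([!a] ++ (v ++ ([b, !b] ++ w))) <+
            u ++ ([a, !a] ++ (v ++ ([b, !b] ++ w))) :=
          (List.append_sublist_append_left u).mpr (Sublist.cons a (Sublist.refl _))
        refine ⟨⟨?_, hxz.trans hsub⟩, ⟨?_, hyz.trans hsub⟩⟩ <;>
          · simp only [List.length_append, List.length_cons] at hl ⊢
            omega
      · have h1' : ([a, !a] ++ v ++ [b]) <+ s := by simpa [List.append_assoc] using h1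
        have h2' : ([!a] ++ v ++ [b, !b]) <+ s := by simpa [List.append_assoc] using h2
        have hxc : u ++ (([a, !a] ++ v ++ [b]) ++ w) <+ u ++ (s ++ w) :=
          (List.append_sublist_append_left u).mpr
            ((List.append_sublist_append_right w).mpr h1')
        have hyc : u ++ (([!a] ++ v ++ [b, !b]) ++ w) <+ u ++ (s ++ w) :=
          (List.append_sublist_append_left u).mpr
            ((List.append_sublist_append_right w).mpr h2')
        refine ⟨⟨?_, by simpa [List.append_assoc] using hxc⟩,
          ⟨?_, by simpa [List.append_assoc] using hyc⟩⟩ <;>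
          · simp only [List.length_append, List.length_cons] at hl1 ⊢
            omega
  · rw [Set.disjoint_left]
    rintro c ⟨hcl, hcs⟩ ⟨s, ⟨⟨⟨hl1, -⟩, -⟩, hns⟩, rfl⟩
    apply hns
    constructor
    · simp only [List.length_append, List.length_cons] at hl1 ⊢
      omega
    · have h5 : u ++ (([a, !a] ++ v ++ [b, !b]) ++ w) <+ u ++ (s ++ w) := by
        simpa [List.append_assoc] using hcs
      exact (List.append_sublist_append_right w).mp
        ((List.append_sublist_append_left u).mp h5)
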